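/- Let a = (a_0, …, a_{2m}) be a distinguished type-C u-symbol. For every part [k,l] of a, the number of isolated points of a contained in [k,l] is congruent to the length l−k+1 of the part modulo 2. -/
import Mathlib


open scoped Classical

/-- The map `i` from type-C u-symbols to type-C symbols: the `j`-th entry is
`a j - ⌈j/2⌉`. -/
def mapC (a : ℕ → ℕ) : ℕ → ℕ := fun j => a j - (j + 1) / 2

/-- A type-C u-symbol of rank `n` (with `2m+1` entries, indexed `0,…,2m`). -/
def IsUSymC (n m : ℕ) (a : ℕ → ℕ) : Prop :=
  1 ≤ a 1 ∧ (∀ i, i + 2 ≤ 2 * m → a i + 2 ≤ a (i + 2)) ∧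
    (∑ j ∈ Finset.range (2 * m + 1), a j) = n + 2 * m ^ 2 + m

/-- The u-symbol `a` is distinguished: its entries are nondecreasing. -/
def DistC (m : ℕ) (a : ℕ → ℕ) : Prop := ∀ i, i + 1 ≤ 2 * m → a i ≤ a (i + 1)

/-- `k` is an isolated point of the u-symbol `a`: the `k`-th entry of `i(a)` differs
from every other entry of `i(a)`. -/
def IsIsolC (m : ℕ) (a : ℕ → ℕ) (k : ℕ) : Prop :=
  k ≤ 2 * m ∧ ∀ l ≤ 2 * m, l ≠ k → mapC a l ≠ mapC a k

/-- `[k,l]` is a ladder of `a`: the entries `a k, …, a l` are `c, c+1, …, c+l-k`,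
with `a (k-1) < c - 1` if `k > 0` and `a (l+1) > c + (l-k) + 1` if `l < 2m`. -/
def IsLadderC (m : ℕ) (a : ℕ → ℕ) (k l : ℕ) : Prop :=
  k ≤ l ∧ l ≤ 2 * m ∧ (∀ j, k ≤ j → j ≤ l → a j = a k + (j - k)) ∧
    (0 < k → a (k - 1) + 1 < a k) ∧ (l < 2 * m → a l + 1 < a (l + 1))

/-- `[k,l]` is a staircase of `a`: `l-k+1` is even and the entries `a k, …, a l` are
`c, c, c+2, c+2, …, c+l-k-1, c+l-k-1`, with `a (k-2) < c - 2` if `k > 1` and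
`a (l+2) > c + (l-k) + 1` if `l < 2m - 1`. -/
def IsStairC (m : ℕ) (a : ℕ → ℕ) (k l : ℕ) : Prop :=
  k ≤ l ∧ l ≤ 2 * m ∧ (l - k) % 2 = 1 ∧
    (∀ j, k ≤ j → j ≤ l → a j = a k + 2 * ((j - k) / 2)) ∧
    (1 < k → a (k - 2) + 2 < a k) ∧ (l + 2 ≤ 2 * m → a l + 2 < a (l + 2))

/-- A part is a ladder or a staircase. -/
def IsPartC (m : ℕ) (a : ℕ → ℕ) (k l : ℕ) : Prop :=
  IsLadderC m a k l ∨ IsStairC m a k l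

set_option maxHeartbeats 4000000 in
/-- For every part `[k,l]` of a distinguished type-C u-symbol, the number of
isolated points contained in `[k,l]` is congruent to the length `l - k + 1`
of the part modulo `2`. -/
theorem stmt7 (n m : ℕ) (hn : 1 ≤ n) (hm : 1 ≤ m) (a : ℕ → ℕ)
    (ha : IsUSymC n m a) (hdist : DistC m a)
    (k l : ℕ) (hp : IsPartC m a k l) :
    ((Finset.Icc k l).filter (IsIsolC m a)).card % 2 = (l - k + 1) % 2 := by
  obtain ⟨h1, h2, -⟩ := ha
  have hlow : ∀ j, j ≤ 2 * m → (j + 1) / 2 ≤ a j := by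
    intro j
    induction j using Nat.strong_induction_on with
    | _ j ih =>
      match j with
      | 0 => intro _; omega
      | 1 => intro _; omega
      | (j + 2) =>
        intro hj
        have hh := h2 j (by omega)
        have := ih j (by omega) (by omega)
        omega
  have hmono0 : ∀ y, y ≤ 2 * m → ∀ x, x ≤ y → a x ≤ a y := by
    intro y
    induction y with
    | zero =>
      intro _ x hx
      have hx0 : x = 0 := by omega
      subst hx0; exact le_rfl
    | succ y ih =>
      intro hy x hx
      rcases Nat.lt_or_ge x (y + 1) with h | h
      · exact le_trans (ih (by omega) x (by omega)) (hdist y (by omega))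
      · have hx1 : x = y + 1 := by omega
        subst hx1; exact le_rfl
  have hmono : ∀ x y, x ≤ y → y ≤ 2 * m → a x ≤ a y := fun x y hxy hy => hmono0 y hy x hxy
  have hchain : ∀ d x, x + 2 * d ≤ 2 * m → a x + 2 * d ≤ a (x + 2 * d) := by
    intro d
    induction d with
    | zero => intro x _; simp
    | succ d ih =>
      intro x hx
      have hA := ih x (by omega)
      have hB := h2 (x + 2 * d) (by omega)
      have he : x + 2 * (d + 1) = x + 2 * d + 2 := by ring
      rw [he]
      omega
  have hge : ∀ x y, x ≤ y → y ≤ 2 * m → a x + 2 * ((y - x) / 2) ≤ a y := by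
    intro x y hxy hy
    have hA := hchain ((y - x) / 2) x (by omega)
    have hB := hmono (x + 2 * ((y - x) / 2)) y (by omega) hy
    omega
  have hb2 : ∀ x y, x ≤ y → y ≤ 2 * m → (y - x) % 2 = 0 → mapC a x ≤ mapC a y := by
    intro x y hxy hy hpar
    have hA := hge x y hxy hy
    have hx := hlow x (by omega)
    have hy' := hlow y hy
    simp only [mapC]
    omega
  have sepL : ∀ K c, K ≤ 2 * m → (0 < K → mapC a (K - 1) < c) → (1 < K → mapC a (K - 2) < c) →
      ∀ j, j < K → mapC a j < c := by
    intro K c hK hA hB j hj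
    rcases Nat.even_or_odd (K - 1 - j) with he | ho
    · rw [Nat.even_iff] at he
      exact lt_of_le_of_lt (hb2 j (K - 1) (by omega) (by omega) (by omega)) (hA (by omega))
    · rw [Nat.odd_iff] at ho
      exact lt_of_le_of_lt (hb2 j (K - 2) (by omega) (by omega) (by omega)) (hB (by omega))
  have sepR : ∀ L c, L ≤ 2 * m → (L + 1 ≤ 2 * m → c < mapC a (L + 1)) →
      (L + 2 ≤ 2 * m → c < mapC a (L + 2)) → ∀ j, L < j → j ≤ 2 * m → c < mapC a j := by
    intro L c hL hA hB j hj hj2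
    rcases Nat.even_or_odd (j - (L + 1)) with he | ho
    · rw [Nat.even_iff] at he
      exact lt_of_lt_of_le (hA (by omega)) (hb2 (L + 1) j (by omega) hj2 (by omega))
    · rw [Nat.odd_iff] at ho
      exact lt_of_lt_of_le (hB (by omega)) (hb2 (L + 2) j (by omega) hj2 (by omega))
  simp only [IsPartC, IsLadderC, IsStairC] at hp
  rcases hp with ⟨hkl, hl2m, hform, hbL, hbR⟩ | ⟨hkl, hl2m, hD, hform, hbL, hbR⟩
  · -- Ladder case
    have hisol : ∀ i, k ≤ i → i ≤ l →
        (∀ j, k ≤ j → j ≤ l → j ≠ i → mapC a j ≠ mapC a i) → IsIsolC m a i := by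
      intro i hki hil hin
      refine ⟨by omega, ?_⟩
      intro j hj2 hne
      rcases Nat.lt_or_ge j k with hjk | hjk
      · refine (sepL k (mapC a i) (by omega) ?_ ?_ j hjk).ne
        · intro hk0
          have hbb := hbL hk0
          have hfi := hform i hki hil
          have := hlow (k - 1) (by omega)
          have := hlow i (by omega)
          simp only [mapC]; omega
        · intro hk1
          have hbb := h2 (k - 2) (by omega)
          have hre : k - 2 + 2 = k := by omega
          rw [hre] at hbb
          have hfi := hform i hki hil
          have := hlow (k - 2) (by omega)
          have := hlow i (by omega)
          simp only [mapC]; omega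
      · rcases le_or_gt j l with hjl | hjl
        · exact hin j hjk hjl hne
        · refine (sepR l (mapC a i) hl2m ?_ ?_ j hjl hj2).ne'
          · intro hl1
            have hbb := hbR (by omega)
            have hfi := hform i hki hil
            have hfl := hform l hkl le_rfl
            have := hlow (l + 1) (by omega)
            have := hlow i (by omega)
            simp only [mapC]; omega
          · intro hl2'
            have hbb := h2 l (by omega)
            have hfi := hform i hki hil
            have hfl := hform l hkl le_rfl
            have := hlow (l + 2) (by omega)
            have := hlow i (by omega)
            simp only [mapC]; omega
    rcases Nat.mod_two_eq_zero_or_one k with hk2 | hk2 <;>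
      rcases Nat.mod_two_eq_zero_or_one l with hl2' | hl2'
    · -- k even, l even : isolated set = {l}
      have hfe : (Finset.Icc k l).filter (IsIsolC m a) = {l} := by
        ext i
        simp only [Finset.mem_filter, Finset.mem_Icc, Finset.mem_singleton, IsIsolC]
        constructor
        · rintro ⟨⟨hki, hil⟩, -, hh⟩
          by_contra hne
          rcases Nat.mod_two_eq_zero_or_one i with hi2 | hi2
          · refine hh (i + 1) (by omega) (by omega) ?_
            have hfi := hform i hki hil
            have hfi1 := hform (i + 1) (by omega) (by omega)
            have := hlow i (by omega)
            have := hlow (i + 1) (by omega)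
            simp only [mapC]; omega
          · refine hh (i - 1) (by omega) (by omega) ?_
            have hfi := hform i hki hil
            have hfi1 := hform (i - 1) (by omega) (by omega)
            have := hlow i (by omega)
            have := hlow (i - 1) (by omega)
            simp only [mapC]; omega
        · intro hii
          rw [hii]
          refine ⟨⟨hkl, le_rfl⟩, hisol l hkl le_rfl ?_⟩
          intro j hkj hjl hne
          have hfj := hform j hkj hjl
          have hfl := hform l hkl le_rfl
          have := hlow j (by omega)
          have := hlow l (by omega)
          simp only [mapC]; omega
      rw [hfe, Finset.card_singleton]
      omega
    · -- k even, l odd : isolated set = ∅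
      have hfe : (Finset.Icc k l).filter (IsIsolC m a) = ∅ := by
        ext i
        simp only [Finset.mem_filter, Finset.mem_Icc, Finset.notMem_empty, iff_false,
          IsIsolC]
        rintro ⟨⟨hki, hil⟩, -, hh⟩
        rcases Nat.mod_two_eq_zero_or_one i with hi2 | hi2
        · refine hh (i + 1) (by omega) (by omega) ?_
          have hfi := hform i hki hil
          have hfi1 := hform (i + 1) (by omega) (by omega)
          have := hlow i (by omega)
          have := hlow (i + 1) (by omega)
          simp only [mapC]; omega
        · refine hh (i - 1) (by omega) (by omega) ?_
          have hfi := hform i hki hil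
          have hfi1 := hform (i - 1) (by omega) (by omega)
          have := hlow i (by omega)
          have := hlow (i - 1) (by omega)
          simp only [mapC]; omega
      rw [hfe, Finset.card_empty]
      omega
    · -- k odd, l even : isolated set = {k, l}
      have hfe : (Finset.Icc k l).filter (IsIsolC m a) = {k, l} := by
        ext i
        simp only [Finset.mem_filter, Finset.mem_Icc, Finset.mem_insert, Finset.mem_singleton,
          IsIsolC]
        constructor
        · rintro ⟨⟨hki, hil⟩, -, hh⟩
          by_contra hne
          push_neg at hne
          obtain ⟨hne1, hne2⟩ := hne
          rcases Nat.mod_two_eq_zero_or_one i with hi2 | hi2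
          · refine hh (i + 1) (by omega) (by omega) ?_
            have hfi := hform i hki hil
            have hfi1 := hform (i + 1) (by omega) (by omega)
            have := hlow i (by omega)
            have := hlow (i + 1) (by omega)
            simp only [mapC]; omega
          · refine hh (i - 1) (by omega) (by omega) ?_
            have hfi := hform i hki hil
            have hfi1 := hform (i - 1) (by omega) (by omega)
            have := hlow i (by omega)
            have := hlow (i - 1) (by omega)
            simp only [mapC]; omega
        · rintro (hii | hii) <;> rw [hii]
          · refine ⟨⟨le_rfl, hkl⟩, hisol k le_rfl hkl ?_⟩
            intro j hkj hjl hne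
            have hfj := hform j hkj hjl
            have := hlow j (by omega)
            have := hlow k (by omega)
            simp only [mapC]; omega
          · refine ⟨⟨hkl, le_rfl⟩, hisol l hkl le_rfl ?_⟩
            intro j hkj hjl hne
            have hfj := hform j hkj hjl
            have hfl := hform l hkl le_rfl
            have := hlow j (by omega)
            have := hlow l (by omega)
            simp only [mapC]; omega
      rw [hfe, Finset.card_pair (by omega)]
      omega
    · -- k odd, l odd : isolated set = {k}
      have hfe : (Finset.Icc k l).filter (IsIsolC m a) = {k} := by
        ext i
        simp only [Finset.mem_filter, Finset.mem_Icc, Finset.mem_singleton, IsIsolC]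
        constructor
        · rintro ⟨⟨hki, hil⟩, -, hh⟩
          by_contra hne
          rcases Nat.mod_two_eq_zero_or_one i with hi2 | hi2
          · refine hh (i + 1) (by omega) (by omega) ?_
            have hfi := hform i hki hil
            have hfi1 := hform (i + 1) (by omega) (by omega)
            have := hlow i (by omega)
            have := hlow (i + 1) (by omega)
            simp only [mapC]; omega
          · refine hh (i - 1) (by omega) (by omega) ?_
            have hfi := hform i hki hil
            have hfi1 := hform (i - 1) (by omega) (by omega)
            have := hlow i (by omega)
            have := hlow (i - 1) (by omega)
            simp only [mapC]; omega
        · intro hii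
          rw [hii]
          refine ⟨⟨le_rfl, hkl⟩, hisol k le_rfl hkl ?_⟩
          intro j hkj hjl hne
          have hfj := hform j hkj hjl
          have := hlow j (by omega)
          have := hlow k (by omega)
          simp only [mapC]; omega
      rw [hfe, Finset.card_singleton]
      omega
  · -- Staircase case
    have hisol : ∀ i, k ≤ i → i ≤ l →
        (∀ j, k ≤ j → j ≤ l → j ≠ i → mapC a j ≠ mapC a i) → IsIsolC m a i := by
      intro i hki hil hin
      have hk1l : k + 1 ≤ l := by omega
      refine ⟨by omega, ?_⟩
      intro j hj2 hne
      rcases Nat.lt_or_ge j k with hjk | hjk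
      · refine (sepL k (mapC a i) (by omega) ?_ ?_ j hjk).ne
        · intro hk0
          have hbb := h2 (k - 1) (by omega)
          have hre : k - 1 + 2 = k + 1 := by omega
          rw [hre] at hbb
          have hfk1 := hform (k + 1) (by omega) hk1l
          have hfi := hform i hki hil
          have := hlow (k - 1) (by omega)
          have := hlow i (by omega)
          simp only [mapC]; omega
        · intro hk1
          have hbb := hbL hk1
          have hfi := hform i hki hil
          have := hlow (k - 2) (by omega)
          have := hlow i (by omega)
          simp only [mapC]; omega
      · rcases le_or_gt j l with hjl | hjl
        · exact hin j hjk hjl hne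
        · refine (sepR l (mapC a i) hl2m ?_ ?_ j hjl hj2).ne'
          · intro hl1
            have hbb := h2 (l - 1) (by omega)
            have hre : l - 1 + 2 = l + 1 := by omega
            rw [hre] at hbb
            have hfl1 := hform (l - 1) (by omega) (by omega)
            have hfi := hform i hki hil
            have := hlow (l + 1) (by omega)
            have := hlow i (by omega)
            simp only [mapC]; omega
          · intro hl2'
            have hbb := hbR hl2'
            have hfl := hform l hkl le_rfl
            have hfi := hform i hki hil
            have := hlow (l + 2) (by omega)
            have := hlow i (by omega)
            simp only [mapC]; omega
    rcases Nat.mod_two_eq_zero_or_one k with hk2 | hk2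
    · -- k even : isolated set = {k+1, l-1}
      have hfe : (Finset.Icc k l).filter (IsIsolC m a) = {k + 1, l - 1} := by
        ext i
        simp only [Finset.mem_filter, Finset.mem_Icc, Finset.mem_insert, Finset.mem_singleton,
          IsIsolC]
        constructor
        · rintro ⟨⟨hki, hil⟩, -, hh⟩
          by_contra hne
          push_neg at hne
          obtain ⟨hne1, hne2⟩ := hne
          rcases Nat.mod_two_eq_zero_or_one i with hi2 | hi2
          · refine hh (i + 3) (by omega) (by omega) ?_
            have hfi := hform i hki hil
            have hfi3 := hform (i + 3) (by omega) (by omega)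
            have := hlow i (by omega)
            have := hlow (i + 3) (by omega)
            simp only [mapC]; omega
          · refine hh (i - 3) (by omega) (by omega) ?_
            have hfi := hform i hki hil
            have hfi3 := hform (i - 3) (by omega) (by omega)
            have := hlow i (by omega)
            have := hlow (i - 3) (by omega)
            simp only [mapC]; omega
        · rintro (hii | hii) <;> rw [hii]
          · refine ⟨⟨by omega, by omega⟩, hisol (k + 1) (by omega) (by omega) ?_⟩
            intro j hkj hjl hne
            have hfj := hform j hkj hjl
            have hf1 := hform (k + 1) (by omega) (by omega)
            have := hlow j (by omega)
            have := hlow (k + 1) (by omega)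
            simp only [mapC]; omega
          · refine ⟨⟨by omega, by omega⟩, hisol (l - 1) (by omega) (by omega) ?_⟩
            intro j hkj hjl hne
            have hfj := hform j hkj hjl
            have hf1 := hform (l - 1) (by omega) (by omega)
            have := hlow j (by omega)
            have := hlow (l - 1) (by omega)
            simp only [mapC]; omega
      rw [hfe, Finset.card_pair (by omega)]
      omega
    · -- k odd : isolated set = ∅
      have hfe : (Finset.Icc k l).filter (IsIsolC m a) = ∅ := by
        ext i
        simp only [Finset.mem_filter, Finset.mem_Icc, Finset.notMem_empty, iff_false,
          IsIsolC]
        rintro ⟨⟨hki, hil⟩, -, hh⟩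
        rcases Nat.mod_two_eq_zero_or_one i with hi2 | hi2
        · refine hh (i - 1) (by omega) (by omega) ?_
          have hfi := hform i hki hil
          have hfi1 := hform (i - 1) (by omega) (by omega)
          have := hlow i (by omega)
          have := hlow (i - 1) (by omega)
          simp only [mapC]; omega
        · refine hh (i + 1) (by omega) (by omega) ?_
          have hfi := hform i hki hil
          have hfi1 := hform (i + 1) (by omega) (by omega)
          have := hlow i (by omega)
          have := hlow (i + 1) (by omega)
          simp only [mapC]; omega
      rw [hfe, Finset.card_empty]
      omega
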